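/- Let γ, ν > 0, ξ₀ ∈ ℝ, s₀ ∈ ℝ (representing S'(0)), let w : ℝ → ℝ be integrable with w(−y) = w(y), let λ > −γ be real and p ∈ ℝ, and set ψ = √((γ+λ)/ν). Then the complex-valued function V(x,t) = e^{λt} e^{ipx} satisfies the linearized evolution equation V(x,t) = s₀ ∫_{−∞}^{t} Θ(ξ₀, t−s) ( ∫_ℝ w(x−x') V(x',s) dx' ) ds for all x ∈ ℝ and t ∈ ℝ, where Θ(ξ,u) = e^{−γu} e^{−ξ²/(4νu)}/√(4πνu) for u > 0, if and only if 1 = s₀ ŵ(p) exp(−ψ|ξ₀|)/(2ψν), where ŵ(p) = ∫_ℝ w(y) e^{−ipy} dy. -/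

import Mathlib

open Real MeasureTheory

section Auxiliary

open Set

private lemma aux_refl_int (f : ℝ → ℝ) (t : ℝ) :
    ∫ s in Iio t, f (t - s) = ∫ u in Ioi (0:ℝ), f u := by
  have A : MeasurableEmbedding fun x : ℝ => t - x := by
    have : (fun x : ℝ => t - x) = (fun x : ℝ => t + x) ∘ Neg.neg := by ext x; simp [sub_eq_add_neg]
    rw [this]
    exact (measurableEmbedding_addLeft t).comp
      (Homeomorph.neg ℝ).isClosedEmbedding.measurableEmbedding
  have hmap : Measure.map (fun x : ℝ => t - x) volume = volume := by
    have : (fun x : ℝ => t - x) = (fun x : ℝ => t + x) ∘ Neg.neg := by ext x; simp [sub_eq_add_neg]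
    rw [this, ← Measure.map_map (measurable_const_add t) measurable_neg,
      Measure.map_neg_eq_self, map_add_left_eq_self]
  have h := A.setIntegral_map (μ := volume) f (Ioi 0)
  rw [hmap] at h
  have hpre : (fun x : ℝ => t - x) ⁻¹' (Ioi 0) = Iio t := by
    ext x; simp [sub_pos]
  rw [hpre] at h
  exact h.symm

private lemma aux_inv_subst (h : ℝ → ℝ) {c : ℝ} (hc : 0 < c) :
    ∫ x in Ioi (0:ℝ), h x = ∫ x in Ioi (0:ℝ), (c / x ^ 2) * h (c / x) := by
  have himg : (fun x : ℝ => c / x) '' Ioi 0 = Ioi 0 := by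
    ext y
    constructor
    · rintro ⟨x, hx, rfl⟩
      exact div_pos hc hx
    · intro hy
      exact ⟨c / y, div_pos hc hy, by field_simp⟩
  have hderiv : ∀ x ∈ Ioi (0:ℝ), HasDerivWithinAt (fun x => c / x) (-(c / x ^ 2)) (Ioi 0) x := by
    intro x hx
    have : HasDerivAt (fun x : ℝ => c / x) (-(c / x ^ 2)) x := by
      simpa [div_eq_mul_inv, neg_mul, mul_comm] using (hasDerivAt_inv (ne_of_gt hx)).const_mul c
    exact this.hasDerivWithinAt
  have hinj : InjOn (fun x : ℝ => c / x) (Ioi 0) := by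
    intro a ha b hb hab
    have ha' : (a:ℝ) ≠ 0 := ne_of_gt ha
    have hb' : (b:ℝ) ≠ 0 := ne_of_gt hb
    have hab' : c / a = c / b := hab
    rw [div_eq_div_iff ha' hb'] at hab'
    exact (mul_left_cancel₀ (ne_of_gt hc) hab').symm
  have key := integral_image_eq_integral_abs_deriv_smul measurableSet_Ioi hderiv hinj h
  rw [himg] at key
  rw [key]
  refine setIntegral_congr_fun measurableSet_Ioi (fun x hx => ?_)
  have hx0 : (0:ℝ) < x := hx
  have hx2 : (0:ℝ) < x ^ 2 := by positivity
  rw [abs_neg, abs_of_pos (div_pos hc hx2), smul_eq_mul]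

private lemma aux_glasser {a c : ℝ} (ha : 0 < a) (hc : 0 < c) :
    ∫ x in Ioi (0:ℝ), (1 + c / x ^ 2) * Real.exp (-a * (x - c / x) ^ 2)
      = Real.sqrt (π / a) := by
  set f : ℝ → ℝ := fun x => x - c / x with hf
  have himg : f '' Ioi 0 = univ := by
    refine eq_univ_of_forall fun y => ?_
    have hyc : (0:ℝ) ≤ y ^ 2 + 4 * c := by positivity
    set r := Real.sqrt (y ^ 2 + 4 * c) with hr
    have hr2 : r ^ 2 = y ^ 2 + 4 * c := Real.sq_sqrt hyc
    have hry : |y| < r := by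
      rw [← Real.sqrt_sq_eq_abs, hr]
      exact Real.sqrt_lt_sqrt (by positivity) (by linarith)
    have hty : 0 < (y + r) / 2 := by
      have := abs_nonneg y
      have := neg_abs_le y
      linarith
    refine ⟨(y + r) / 2, hty, ?_⟩
    have hyr : y + r ≠ 0 := by intro h; rw [h] at hty; simp at hty
    show (y + r) / 2 - c / ((y + r) / 2) = y
    rw [div_div_eq_mul_div, div_sub_div _ _ (two_ne_zero) hyr, div_eq_iff (by positivity)]
    nlinarith [hr2]
  have hderiv : ∀ x ∈ Ioi (0:ℝ), HasDerivWithinAt f (1 + c / x ^ 2) (Ioi 0) x := by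
    intro x hx
    have hx0 : (0:ℝ) < x := hx
    have h1 : HasDerivAt (fun x : ℝ => c / x) (-(c / x ^ 2)) x := by
      simpa [div_eq_mul_inv, neg_mul, mul_comm] using (hasDerivAt_inv (ne_of_gt hx0)).const_mul c
    have : HasDerivAt f (1 - -(c / x ^ 2)) x := (hasDerivAt_id x).sub h1
    simpa [sub_neg_eq_add] using this.hasDerivWithinAt
  have hinj : InjOn f (Ioi 0) := by
    have hmono : StrictMonoOn f (Ioi 0) := by
      intro s hs t ht hst
      have hs0 : (0:ℝ) < s := hs
      have ht0 : (0:ℝ) < t := ht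
      have : c / t < c / s := div_lt_div_of_pos_left hc hs0 hst
      simp only [hf]
      linarith
    exact hmono.injOn
  have key := integral_image_eq_integral_abs_deriv_smul measurableSet_Ioi hderiv hinj
    (fun y => Real.exp (-a * y ^ 2))
  rw [himg] at key
  calc ∫ x in Ioi (0:ℝ), (1 + c / x ^ 2) * Real.exp (-a * (x - c / x) ^ 2)
      = ∫ x in Ioi (0:ℝ), |1 + c / x ^ 2| • Real.exp (-a * f x ^ 2) := by
        refine setIntegral_congr_fun measurableSet_Ioi (fun x hx => ?_)
        have hx0 : (0:ℝ) < x := hx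
        have hpos : (0:ℝ) < 1 + c / x ^ 2 := by positivity
        rw [abs_of_pos hpos, smul_eq_mul]
    _ = ∫ x in univ, Real.exp (-a * x ^ 2) := key.symm
    _ = Real.sqrt (π / a) := by rw [setIntegral_univ]; exact integral_gaussian a

private lemma aux_key_integral {a b : ℝ} (ha : 0 < a) (hb : 0 ≤ b) :
    ∫ u in Ioi (0:ℝ), Real.exp (-(a * u) - b / u) / Real.sqrt u
      = Real.sqrt (π / a) * Real.exp (-2 * Real.sqrt (a * b)) := by
  set g : ℝ → ℝ := fun u => Real.exp (-(a * u) - b / u) / Real.sqrt u with hg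
  have hsub : ∫ u in Ioi (0:ℝ), g u
      = ∫ x in Ioi (0:ℝ), 2 * Real.exp (-(a * x ^ 2) - b / x ^ 2) := by
    rw [← integral_comp_rpow_Ioi g (two_ne_zero)]
    refine setIntegral_congr_fun measurableSet_Ioi (fun x hx => ?_)
    have hx0 : (0:ℝ) < x := hx
    have h1 : x ^ ((2:ℝ) - 1) = x := by rw [show (2:ℝ)-1 = 1 by norm_num, Real.rpow_one]
    have h2 : x ^ (2:ℝ) = x ^ 2 := by rw [Real.rpow_two]
    rw [smul_eq_mul, h1, h2, hg]
    simp only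
    rw [Real.sqrt_sq hx0.le]
    field_simp
    ring
  rw [hsub]
  rcases eq_or_lt_of_le hb with hb0 | hb0
  · subst hb0
    simp only [zero_div, sub_zero, mul_zero, Real.sqrt_zero, mul_zero, neg_zero, Real.exp_zero,
      mul_one]
    have : ∀ x : ℝ, Real.exp (-(a * x ^ 2)) = Real.exp (-a * x ^ 2) := by
      intro x; rw [neg_mul]
    simp_rw [this, integral_const_mul, integral_gaussian_Ioi]
    ring
  · set c : ℝ := Real.sqrt (b / a) with hcdef
    have hc : 0 < c := Real.sqrt_pos.2 (div_pos hb0 ha)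
    have hc2 : c ^ 2 = b / a := Real.sq_sqrt (div_nonneg hb (le_of_lt ha))
    have hac2 : a * c ^ 2 = b := by rw [hc2]; field_simp
    have hac : a * c = Real.sqrt (a * b) := by
      rw [show a * b = (a * c) ^ 2 by rw [mul_pow]; nlinarith [hac2], Real.sqrt_sq (by positivity)]
    set h : ℝ → ℝ := fun x => Real.exp (-(a * x ^ 2) - b / x ^ 2) with hh
    have hInt1 : IntegrableOn h (Ioi 0) := by
      refine Integrable.mono' ((integrable_exp_neg_mul_sq ha).integrableOn)
        ?_ (ae_of_all _ fun x => ?_)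
      · refine (ContinuousOn.rexp ?_).aestronglyMeasurable measurableSet_Ioi
        refine ContinuousOn.sub (by fun_prop) ?_
        exact ContinuousOn.div continuousOn_const (by fun_prop)
          (fun x hx => by have : (0:ℝ) < x := hx; positivity)
      · rw [hh]
        simp only [Real.norm_eq_abs, abs_of_pos (Real.exp_pos _)]
        apply Real.exp_le_exp.2
        have : 0 ≤ b / x ^ 2 := div_nonneg hb (sq_nonneg x)
        rw [neg_mul]
        linarith
    have hInt2 : IntegrableOn (fun x => (c / x ^ 2) * h x) (Ioi 0) := by
      refine Integrable.mono' (((integrable_exp_neg_mul_sq ha).integrableOn).const_mul (c / b))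
        ?_ ?_
      · refine ContinuousOn.mul (ContinuousOn.div continuousOn_const (by fun_prop)
          (fun x hx => by have : (0:ℝ) < x := hx; positivity)) ?_ |>.aestronglyMeasurable
          measurableSet_Ioi
        refine ContinuousOn.rexp (ContinuousOn.sub (by fun_prop) ?_)
        exact ContinuousOn.div continuousOn_const (by fun_prop)
          (fun x hx => by have : (0:ℝ) < x := hx; positivity)
      · refine (ae_restrict_iff' measurableSet_Ioi).2 (ae_of_all _ fun x hx => ?_)
        have hx0 : (0:ℝ) < x := hx
        have hx2 : (0:ℝ) < x ^ 2 := by positivity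
        have hsplit : h x = Real.exp (-(a * x ^ 2)) * Real.exp (-(b / x ^ 2)) := by
          rw [hh]; simp only; rw [← Real.exp_add]; ring_nf
        have hexpb : Real.exp (-(b / x ^ 2)) ≤ x ^ 2 / b := by
          have hy : (0:ℝ) < b / x ^ 2 := div_pos hb0 hx2
          have h1 : b / x ^ 2 ≤ Real.exp (b / x ^ 2) := by
            linarith [Real.add_one_le_exp (b / x ^ 2)]
          have h2 : (Real.exp (b / x ^ 2))⁻¹ ≤ (b / x ^ 2)⁻¹ := inv_anti₀ hy h1
          rw [Real.exp_neg]
          rwa [inv_div] at h2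
        have hnorm : ‖(c / x ^ 2) * h x‖ = (c / x ^ 2) * h x := by
          rw [Real.norm_eq_abs, abs_of_nonneg]
          have : 0 < h x := Real.exp_pos _
          positivity
        rw [hnorm, hsplit]
        have hle : (c / x ^ 2) * (Real.exp (-(a * x ^ 2)) * Real.exp (-(b / x ^ 2)))
            ≤ (c / x ^ 2) * (Real.exp (-(a * x ^ 2)) * (x ^ 2 / b)) := by
          apply mul_le_mul_of_nonneg_left _ (by positivity)
          exact mul_le_mul_of_nonneg_left hexpb (le_of_lt (Real.exp_pos _))
        calc (c / x ^ 2) * (Real.exp (-(a * x ^ 2)) * Real.exp (-(b / x ^ 2)))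
            ≤ (c / x ^ 2) * (Real.exp (-(a * x ^ 2)) * (x ^ 2 / b)) := hle
          _ = c / b * Real.exp (-a * x ^ 2) := by field_simp
    have hIeq : ∫ x in Ioi (0:ℝ), h x = ∫ x in Ioi (0:ℝ), (c / x ^ 2) * h x := by
      rw [aux_inv_subst h hc]
      refine setIntegral_congr_fun measurableSet_Ioi (fun x hx => ?_)
      have hx0 : (0:ℝ) < x := hx
      congr 1
      rw [hh]
      simp only
      congr 1
      rw [div_pow, ← hac2]
      field_simp
      ring
    have h2I : (2:ℝ) * ∫ x in Ioi (0:ℝ), h x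
        = ∫ x in Ioi (0:ℝ), (1 + c / x ^ 2) * h x := by
      have : ∫ x in Ioi (0:ℝ), (1 + c / x ^ 2) * h x
          = (∫ x in Ioi (0:ℝ), h x) + ∫ x in Ioi (0:ℝ), (c / x ^ 2) * h x := by
        rw [← integral_add hInt1 hInt2]
        congr 1
        ext x
        ring
      rw [this, ← hIeq]
      ring
    have hpoint : ∀ x ∈ Ioi (0:ℝ), (1 + c / x ^ 2) * h x
        = Real.exp (-2 * Real.sqrt (a * b)) * ((1 + c / x ^ 2)
            * Real.exp (-a * (x - c / x) ^ 2)) := by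
      intro x hx
      have hx0 : (0:ℝ) < x := hx
      have : h x = Real.exp (-2 * Real.sqrt (a * b)) * Real.exp (-a * (x - c / x) ^ 2) := by
        rw [hh]
        simp only
        rw [← Real.exp_add]
        congr 1
        rw [← hac, ← hac2]
        field_simp
        ring
      rw [this]
      ring
    have hfin : ∫ x in Ioi (0:ℝ), (1 + c / x ^ 2) * h x
        = Real.exp (-2 * Real.sqrt (a * b)) * Real.sqrt (π / a) := by
      rw [setIntegral_congr_fun measurableSet_Ioi hpoint, integral_const_mul,
        aux_glasser ha hc]
    have h2 : ∫ x in Ioi (0:ℝ), 2 * h x = (2:ℝ) * ∫ x in Ioi (0:ℝ), h x := integral_const_mul 2 h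
    rw [show (fun x : ℝ => 2 * Real.exp (-(a * x ^ 2) - b / x ^ 2)) = fun x => 2 * h x from rfl]
    rw [h2, h2I, hfin]
    ring

end Auxiliary

/-- The plane-wave ansatz `V(x,t) = e^{λt} e^{ipx}` solves the linearized
dendritic neural field equation
`V(x,t) = s₀ ∫_{-∞}^t Θ(ξ₀, t-s) ∫_ℝ w(x-x') V(x',s) dx' ds`
if and only if the dispersion relation
`1 = s₀ ŵ(p) exp(-ψ|ξ₀|)/(2ψν)` holds, where `ψ = √((γ+λ)/ν)` and
`Θ(ξ,u) = e^{-γu} e^{-ξ²/(4νu)}/√(4πνu)`. -/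
theorem linearized_dispersion_relation (γ ν : ℝ) (hγ : 0 < γ) (hν : 0 < ν)
    (ξ₀ s₀ : ℝ) (w : ℝ → ℝ) (hw : Integrable w) (heven : ∀ y : ℝ, w (-y) = w y)
    (lam : ℝ) (hlam : -γ < lam) (p : ℝ)
    (ψ : ℝ) (hψ : ψ = Real.sqrt ((γ + lam) / ν))
    (Θ : ℝ → ℝ → ℝ)
    (hΘ : ∀ ξ u : ℝ, 0 < u → Θ ξ u
        = Real.exp (-γ * u) * Real.exp (-ξ ^ 2 / (4 * ν * u)) / Real.sqrt (4 * π * ν * u)) :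
    ((∀ x t : ℝ,
        Complex.exp ((lam * t : ℝ)) * Complex.exp (Complex.I * p * x)
          = (s₀ : ℂ) * ∫ s in Set.Iio t, (Θ ξ₀ (t - s) : ℂ) *
              ∫ x' : ℝ, (w (x - x') : ℂ) *
                (Complex.exp ((lam * s : ℝ)) * Complex.exp (Complex.I * p * x')))
      ↔ (1 : ℂ) = (s₀ : ℂ) * (∫ y : ℝ, (w y : ℂ) * Complex.exp (-(Complex.I * p * y)))
            * Complex.exp ((-(ψ * |ξ₀|) : ℝ)) / (2 * ψ * ν)) := by
  have ha : 0 < γ + lam := by linarith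
  have hψpos : 0 < ψ := by rw [hψ]; exact Real.sqrt_pos.2 (div_pos ha hν)
  have hψ2 : ψ ^ 2 = (γ + lam) / ν := by rw [hψ]; exact Real.sq_sqrt (le_of_lt (div_pos ha hν))
  set wh : ℂ := ∫ y : ℝ, (w y : ℂ) * Complex.exp (-(Complex.I * p * y)) with hwh
  set H : ℝ → ℝ := fun u => Real.exp (-γ * u) * Real.exp (-ξ₀ ^ 2 / (4 * ν * u))
      / Real.sqrt (4 * π * ν * u) * Real.exp (-(lam * u)) with hH
  set K : ℝ := ∫ u in Set.Ioi (0:ℝ), H u with hKdef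
  -- value of K
  have hK : K = Real.exp (-(ψ * |ξ₀|)) / (2 * ψ * ν) := by
    set b : ℝ := ξ₀ ^ 2 / (4 * ν) with hbdef
    have hb : 0 ≤ b := by positivity
    have hstep : ∀ u ∈ Set.Ioi (0:ℝ), H u
        = (1 / Real.sqrt (4 * π * ν)) * (Real.exp (-((γ+lam) * u) - b / u) / Real.sqrt u) := by
      intro u hu
      have hu0 : (0:ℝ) < u := hu
      have hsu : (0:ℝ) < Real.sqrt u := Real.sqrt_pos.2 hu0
      have hs4 : (0:ℝ) < Real.sqrt (4 * π * ν) := Real.sqrt_pos.2 (by positivity)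
      rw [hH]
      simp only
      rw [show (4*π*ν*u) = (4*π*ν)*u by ring, Real.sqrt_mul (by positivity) u]
      rw [div_mul_eq_mul_div, ← Real.exp_add, ← Real.exp_add,
        show -γ*u + -ξ₀^2/(4*ν*u) + -(lam*u) = -((γ+lam)*u) - b/u by
          rw [hbdef]; field_simp; ring]
      field_simp
    rw [hKdef, setIntegral_congr_fun measurableSet_Ioi hstep, integral_const_mul,
      aux_key_integral ha hb]
    have h1 : Real.sqrt ((γ+lam) * b) = ψ * |ξ₀| / 2 := by
      have hsq : (ψ * |ξ₀| / 2) ^ 2 = (γ+lam) * b := by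
        rw [hbdef, div_pow, mul_pow, hψ2, sq_abs, div_mul_eq_mul_div, div_div]
        rw [mul_div_assoc]
        congr 1
        rw [div_eq_div_iff (by positivity) (by positivity)]
        ring
      rw [← hsq]
      exact Real.sqrt_sq (by positivity)
    have h2 : Real.sqrt (4 * π * ν) = 2 * ψ * ν * Real.sqrt (π / (γ+lam)) := by
      rw [show (4:ℝ) * π * ν = ((2*ψ*ν)^2 * (π/(γ+lam))) by
        rw [mul_pow, mul_pow, hψ2]; field_simp; ring,
        Real.sqrt_mul (by positivity), Real.sqrt_sq (by positivity)]
    rw [h1, h2]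
    have hs : Real.sqrt (π / (γ+lam)) ≠ 0 := ne_of_gt (Real.sqrt_pos.2 (by positivity))
    rw [show -2 * (ψ * |ξ₀| / 2) = -(ψ * |ξ₀|) by ring]
    field_simp
  -- inner spatial integral
  have hinner : ∀ x s : ℝ,
      (∫ x' : ℝ, (w (x - x') : ℂ) *
          (Complex.exp ((lam * s : ℝ)) * Complex.exp (Complex.I * p * x')))
        = Complex.exp ((lam * s : ℝ)) * Complex.exp (Complex.I * p * x) * wh := by
    intro x s
    set F : ℝ → ℂ := fun y => (w y : ℂ) * Complex.exp (Complex.I * p * (x - y)) with hF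
    have h1 : ∀ x' : ℝ, (w (x - x') : ℂ) *
        (Complex.exp ((lam * s : ℝ)) * Complex.exp (Complex.I * p * x'))
        = Complex.exp ((lam * s : ℝ)) * F (x - x') := by
      intro x'
      have hc : (x : ℂ) - ((x - x' : ℝ) : ℂ) = (x' : ℂ) := by push_cast; ring
      rw [hF]
      simp only [hc]
      ring
    simp_rw [h1, integral_const_mul, integral_sub_left_eq_self F volume x]
    have h2 : ∀ y : ℝ, F y = Complex.exp (Complex.I * p * x) *
        ((w y : ℂ) * Complex.exp (-(Complex.I * p * y))) := by
      intro y
      rw [hF]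
      simp only
      rw [show Complex.I * (p:ℂ) * ((x:ℂ) - y) = Complex.I * p * x + -(Complex.I * p * y)
        by ring, Complex.exp_add]
      ring
    simp_rw [h2, integral_const_mul, ← hwh]
    ring
  -- outer time integral
  have houter : ∀ t : ℝ,
      (∫ s in Set.Iio t, (Θ ξ₀ (t - s) : ℂ) * Complex.exp ((lam * s : ℝ)))
        = (K : ℂ) * Complex.exp ((lam * t : ℝ)) := by
    intro t
    have hstep : ∀ s ∈ Set.Iio t, (Θ ξ₀ (t - s) : ℂ) * Complex.exp ((lam * s : ℝ))
        = ((Real.exp (lam * t) * H (t - s) : ℝ) : ℂ) := by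
      intro s hs
      have hts : 0 < t - s := sub_pos.2 hs
      rw [hΘ ξ₀ (t - s) hts, hH]
      push_cast
      have hexp : Complex.exp ((lam : ℂ) * s) = Complex.exp ((lam : ℂ) * t)
          * Complex.exp (-((lam : ℂ) * ((t : ℂ) - s))) := by
        rw [← Complex.exp_add]
        congr 1
        ring
      rw [hexp]
      ring
    rw [setIntegral_congr_fun measurableSet_Iio hstep]
    calc (∫ s in Set.Iio t, ((Real.exp (lam * t) * H (t - s) : ℝ) : ℂ))
        = (((∫ s in Set.Iio t, Real.exp (lam * t) * H (t - s)) : ℝ) : ℂ) := integral_ofReal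
      _ = (((Real.exp (lam * t) * ∫ u in Set.Ioi (0:ℝ), H u) : ℝ) : ℂ) := by
          rw [integral_const_mul, aux_refl_int H t]
      _ = _ := by rw [← hKdef]; push_cast [Complex.ofReal_exp]; ring
  -- main reduction
  have hmain : ∀ x t : ℝ,
      (s₀ : ℂ) * (∫ s in Set.Iio t, (Θ ξ₀ (t - s) : ℂ) *
          ∫ x' : ℝ, (w (x - x') : ℂ) *
            (Complex.exp ((lam * s : ℝ)) * Complex.exp (Complex.I * p * x')))
        = ((s₀ : ℂ) * wh * (K : ℂ))
            * (Complex.exp ((lam * t : ℝ)) * Complex.exp (Complex.I * p * x)) := by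
    intro x t
    simp_rw [hinner x]
    have hre : ∀ s : ℝ, (Θ ξ₀ (t - s) : ℂ) *
        (Complex.exp ((lam * s : ℝ)) * Complex.exp (Complex.I * p * x) * wh)
        = (Complex.exp (Complex.I * p * x) * wh)
            * ((Θ ξ₀ (t - s) : ℂ) * Complex.exp ((lam * s : ℝ))) := by
      intro s
      ring
    simp_rw [hre, integral_const_mul, houter t]
    ring
  have hCeq : (s₀ : ℂ) * wh * (K : ℂ)
      = (s₀ : ℂ) * wh * Complex.exp ((-(ψ * |ξ₀|) : ℝ)) / (2 * ψ * ν) := by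
    rw [hK]
    push_cast [Complex.ofReal_exp]
    ring
  constructor
  · intro h
    have h00 := (h 0 0).trans (hmain 0 0)
    simp only [mul_zero, Complex.ofReal_zero, Complex.exp_zero, one_mul, mul_one] at h00
    rw [← hCeq]
    exact h00
  · intro h x t
    have hC1 : (s₀ : ℂ) * wh * (K : ℂ) = 1 := hCeq.trans h.symm
    rw [hmain x t, hC1, one_mul]
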